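/- Assume d = 4k+2 (k ≥ 1) and q ≡ 3 mod 4, and let S_0 ⊂ F_q^d be the zero-radius sphere. Then for any set G ⊂ F_q^d, Σ_{x ∈ S_0} |1̂_G(x)|² ≤ q^{d−1}|G| + q^{(d−2)/2}|G|², where 1̂_G(x) = Σ_{m ∈ G} χ(−x·m). -/

import Mathlib

open Finset AddChar

set_option linter.unusedSectionVars false

variable {F : Type} [Field F] [Fintype F] [DecidableEq F]

noncomputable def Qc (F : Type) [Field F] [Fintype F] [DecidableEq F] : MulChar F ℂ :=
  (quadraticChar F).ringHomComp (Int.castRingHom ℂ)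

lemma char_ne_two (hq : Fintype.card F % 4 = 3) : ringChar F ≠ 2 := by
  intro h
  have he := FiniteField.even_card_of_char_two (F := F) h
  omega

lemma Qc_ne_one (hq : Fintype.card F % 4 = 3) : Qc F ≠ 1 :=
  (MulChar.ringHomComp_ne_one_iff (by exact_mod_cast Int.cast_injective)).mpr
    (quadraticChar_ne_one (char_ne_two hq))

lemma Qc_quadratic : (Qc F).IsQuadratic :=
  (quadraticChar_isQuadratic F).comp _

lemma Qc_neg_one (hq : Fintype.card F % 4 = 3) : Qc F (-1) = -1 := by
  rw [Qc, MulChar.ringHomComp_apply, quadraticChar_neg_one (char_ne_two hq),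
    ZMod.χ₄_nat_three_mod_four hq]
  norm_num

lemma gauss_sq (hq : Fintype.card F % 4 = 3) {χ : AddChar F ℂ} (hχ : χ ≠ 1) :
    (gaussSum (Qc F) χ) ^ 2 = -(Fintype.card F : ℂ) := by
  rw [gaussSum_sq (Qc_ne_one hq) Qc_quadratic (IsPrimitive.of_ne_one hχ), Qc_neg_one hq]
  ring

lemma Qc_sq {s : F} (hs : s ≠ 0) : Qc F s * Qc F s = 1 := by
  rcases Qc_quadratic (F := F) s with h | h | h
  · exfalso
    rw [Qc, MulChar.ringHomComp_apply] at h
    simp only [MulChar.ringHomComp_apply, eq_intCast, Int.cast_eq_zero] at h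
    have : quadraticChar F s = 0 := by exact_mod_cast h
    exact hs (quadraticChar_eq_zero_iff.mp this)
  · rw [h]; ring
  · rw [h]; ring

lemma card_sqrt (hq : Fintype.card F % 4 = 3) (a : F) :
    ((univ.filter fun t : F => t * t = a).card : ℂ) = Qc F a + 1 := by
  have h := quadraticChar_card_sqrts (char_ne_two hq) a
  rw [Set.toFinset_setOf] at h
  have h2 : (univ.filter fun t : F => t * t = a) = (univ.filter fun t : F => t ^ 2 = a) := by
    simp [sq]
  rw [h2]
  rw [Qc, MulChar.ringHomComp_apply]
  have := congrArg (Int.cast : ℤ → ℂ) h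
  push_cast at this ⊢
  simpa using this

lemma quad_sum (hq : Fintype.card F % 4 = 3) {χ : AddChar F ℂ} (hχ : χ ≠ 1)
    {s : F} (hs : s ≠ 0) :
    ∑ t : F, χ (s * (t * t)) = Qc F s * gaussSum (Qc F) χ := by
  have key : ∑ t : F, χ (s * (t * t)) = ∑ a : F, (Qc F a + 1) * χ (s * a) := by
    rw [← Finset.sum_fiberwise_of_maps_to' (g := fun t : F => t * t) (t := univ)
      (fun _ _ => mem_univ _) (fun a => χ (s * a))]
    refine Finset.sum_congr rfl fun a _ => ?_
    rw [Finset.sum_const, nsmul_eq_mul, card_sqrt hq a]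
  rw [key]
  have split : ∑ a : F, (Qc F a + 1) * χ (s * a)
      = (∑ a : F, Qc F a * χ (s * a)) + ∑ a : F, χ (a * s) := by
    rw [← Finset.sum_add_distrib]
    refine Finset.sum_congr rfl fun a _ => by rw [mul_comm a s]; ring
  rw [split, sum_mulShift s (IsPrimitive.of_ne_one hχ), if_neg hs]
  norm_num
  have hg : ∑ a : F, Qc F a * χ (s * a) = gaussSum (Qc F) (mulShift χ s) := by
    simp [gaussSum, mulShift_apply]
  have hu := gaussSum_mulShift (Qc F) χ (Ne.isUnit hs).unit
  rw [IsUnit.unit_spec] at hu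
  rw [hg, ← hu, ← mul_assoc, Qc_sq hs, one_mul]

lemma comp_square (hq : Fintype.card F % 4 = 3) {χ : AddChar F ℂ} (hχ : χ ≠ 1)
    {s : F} (hs : s ≠ 0) (c : F) :
    ∑ t : F, χ (s * (t * t) + c * t)
      = χ (-(c * c) * (4 * s)⁻¹) * (Qc F s * gaussSum (Qc F) χ) := by
  have h2 : (2 : F) ≠ 0 := Ring.two_ne_zero (char_ne_two hq)
  have h4 : (4 : F) ≠ 0 := by
    have : (4 : F) = 2 * 2 := by norm_num
    rw [this]; exact mul_ne_zero h2 h2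
  set a : F := c * (2 * s)⁻¹ with ha
  have subst := Equiv.sum_comp (Equiv.subRight a) (fun t : F => χ (s * (t * t) + c * t))
  simp only [Equiv.subRight_apply] at subst
  rw [← subst]
  have : ∀ u : F, χ (s * ((u - a) * (u - a)) + c * (u - a))
      = χ (-(c * c) * (4 * s)⁻¹) * χ (s * (u * u)) := by
    intro u
    rw [← map_add_eq_mul]
    congr 1
    rw [ha]
    field_simp
    ring
  rw [Finset.sum_congr rfl fun u _ => this u, ← Finset.mul_sum, quad_sum hq hχ hs]

lemma addchar_map_sum {ι : Type*} (ψ : AddChar F ℂ) (s : Finset ι) (f : ι → F) :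
    ψ (∑ i ∈ s, f i) = ∏ i ∈ s, ψ (f i) := by
  classical
  induction s using Finset.cons_induction with
  | empty => simp
  | cons i s hi ih => rw [Finset.sum_cons, Finset.prod_cons, map_add_eq_mul, ih]

lemma vsum_zero {d : ℕ} {χ : AddChar F ℂ} (hχ : χ ≠ 1) (v : Fin d → F) :
    ∑ x : Fin d → F, χ (∑ i, x i * v i)
      = if v = 0 then ((Fintype.card F : ℂ)) ^ d else 0 := by
  have : ∀ x : Fin d → F, χ (∑ i, x i * v i) = ∏ i, χ (x i * v i) := fun x =>
    addchar_map_sum χ univ _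
  simp_rw [this]
  rw [← Fintype.prod_sum fun i t => χ (t * v i)]
  by_cases hv : v = 0
  · subst hv
    simp only [Pi.zero_apply, mul_zero, map_zero_eq_one, Finset.sum_const, if_true]
    simp [Finset.card_univ]
  · rw [if_neg hv]
    obtain ⟨i, hi⟩ : ∃ i, v i ≠ 0 := by
      by_contra h
      push_neg at h
      exact hv (funext h)
    refine Finset.prod_eq_zero (mem_univ i) ?_
    rw [sum_mulShift (v i) (IsPrimitive.of_ne_one hχ), if_neg hi]
    norm_num

lemma vsum_quad {d : ℕ} (hq : Fintype.card F % 4 = 3) {χ : AddChar F ℂ} (hχ : χ ≠ 1)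
    {s : F} (hs : s ≠ 0) (v : Fin d → F) :
    ∑ x : Fin d → F, χ (s * (∑ i, x i * x i) + ∑ i, x i * v i)
      = χ (-(∑ i, v i * v i) * (4 * s)⁻¹) * (Qc F s * gaussSum (Qc F) χ) ^ d := by
  have harg : ∀ x : Fin d → F, s * (∑ i, x i * x i) + ∑ i, x i * v i
      = ∑ i, (s * (x i * x i) + v i * (x i)) := by
    intro x
    rw [Finset.mul_sum, ← Finset.sum_add_distrib]
    exact Finset.sum_congr rfl fun i _ => by ring
  simp_rw [harg]
  have : ∀ x : Fin d → F, χ (∑ i, (s * (x i * x i) + v i * (x i)))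
      = ∏ i, χ (s * (x i * x i) + v i * (x i)) := fun x => addchar_map_sum χ univ _
  simp_rw [this]
  rw [← Fintype.prod_sum fun i t => χ (s * (t * t) + v i * t)]
  have heach : ∀ i : Fin d, ∑ t : F, χ (s * (t * t) + v i * t)
      = χ (-(v i * v i) * (4 * s)⁻¹) * (Qc F s * gaussSum (Qc F) χ) :=
    fun i => comp_square hq hχ hs (v i)
  rw [Finset.prod_congr rfl fun i _ => heach i, Finset.prod_mul_distrib,
    Finset.prod_const, Finset.card_univ, Fintype.card_fin, ← addchar_map_sum]
  congr 2
  rw [← Finset.sum_mul, ← Finset.sum_neg_distrib]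

lemma sum_inv (hq : Fintype.card F % 4 = 3) {χ : AddChar F ℂ} (hχ : χ ≠ 1) (a : F) :
    ∑ s ∈ univ.erase (0 : F), χ (-a * (4 * s)⁻¹)
      = (if a = 0 then (Fintype.card F : ℂ) else 0) - 1 := by
  have h2 : (2 : F) ≠ 0 := Ring.two_ne_zero (char_ne_two hq)
  have h4 : (4 : F) ≠ 0 := by
    have : (4 : F) = 2 * 2 := by norm_num
    rw [this]; exact mul_ne_zero h2 h2
  by_cases ha : a = 0
  · subst ha
    simp only [neg_zero, zero_mul, map_zero_eq_one, Finset.sum_const, nsmul_eq_mul, mul_one,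
      if_true]
    rw [Finset.card_erase_of_mem (mem_univ _), Finset.card_univ]
    have hc : 0 < Fintype.card F := Fintype.card_pos
    push_cast [Nat.cast_sub hc]
    ring
  · rw [if_neg ha]
    have key : ∑ s ∈ univ.erase (0 : F), χ (-a * (4 * s)⁻¹)
        = ∑ u ∈ univ.erase (0 : F), χ u := by
      refine Finset.sum_nbij' (i := fun s => -a * (4 * s)⁻¹) (j := fun u => -a * (4 * u)⁻¹)
        ?_ ?_ ?_ ?_ ?_
      · intro s hs
        rw [Finset.mem_erase] at hs ⊢
        refine ⟨mul_ne_zero (neg_ne_zero.mpr ha) (inv_ne_zero (mul_ne_zero h4 hs.1)), mem_univ _⟩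
      · intro u hu
        rw [Finset.mem_erase] at hu ⊢
        refine ⟨mul_ne_zero (neg_ne_zero.mpr ha) (inv_ne_zero (mul_ne_zero h4 hu.1)), mem_univ _⟩
      · intro s hs
        rw [Finset.mem_erase] at hs
        field_simp
      · intro u hu
        rw [Finset.mem_erase] at hu
        field_simp
      · intro s _
        rfl
    rw [key]
    have : ∑ u ∈ univ.erase (0 : F), χ u + χ 0 = ∑ u : F, χ u := Finset.sum_erase_add _ _ (mem_univ 0)
    rw [sum_eq_zero_of_ne_one hχ] at this
    rw [map_zero_eq_one] at this
    linear_combination this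

lemma Keval (hq : Fintype.card F % 4 = 3) {χ : AddChar F ℂ} (hχ : χ ≠ 1) (k : ℕ)
    (v : Fin (4 * k + 2) → F) :
    ∑ x ∈ univ.filter (fun x : Fin (4 * k + 2) → F => ∑ i, x i * x i = 0),
        χ (∑ i, x i * v i)
      = (if v = 0 then (Fintype.card F : ℂ) ^ (4 * k + 1) else 0)
        - (Fintype.card F : ℂ) ^ (2 * k)
            * ((if (∑ i, v i * v i) = (0 : F) then (Fintype.card F : ℂ) else 0) - 1) := by
  have hcq : (Fintype.card F : ℂ) ≠ 0 := Nat.cast_ne_zero.mpr Fintype.card_ne_zero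
  have hpow : ∀ s : F, s ≠ 0 →
      (Qc F s * gaussSum (Qc F) χ) ^ (4 * k + 2) = -((Fintype.card F : ℂ) ^ (2 * k + 1)) := by
    intro s hs
    have h1 : 4 * k + 2 = 2 * (2 * k + 1) := by ring
    rw [h1, pow_mul, mul_pow, sq, Qc_sq hs, one_mul, gauss_sq hq hχ,
      Odd.neg_pow ⟨k, by ring⟩]
  have key : (Fintype.card F : ℂ)
        * ∑ x ∈ univ.filter (fun x : Fin (4 * k + 2) → F => ∑ i, x i * x i = 0),
            χ (∑ i, x i * v i)
      = (if v = 0 then (Fintype.card F : ℂ) ^ (4 * k + 2) else 0)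
        - (Fintype.card F : ℂ) ^ (2 * k + 1)
            * ((if (∑ i, v i * v i) = (0 : F) then (Fintype.card F : ℂ) else 0) - 1) := by
    have step1 : (Fintype.card F : ℂ)
          * ∑ x ∈ univ.filter (fun x : Fin (4 * k + 2) → F => ∑ i, x i * x i = 0),
              χ (∑ i, x i * v i)
        = ∑ x : Fin (4 * k + 2) → F,
            (∑ s : F, χ (s * ∑ i, x i * x i)) * χ (∑ i, x i * v i) := by
      rw [Finset.sum_filter, Finset.mul_sum]
      refine Finset.sum_congr rfl fun x _ => ?_
      rw [sum_mulShift _ (IsPrimitive.of_ne_one hχ)]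
      split_ifs with h <;> simp
    have step2 : ∑ x : Fin (4 * k + 2) → F,
          (∑ s : F, χ (s * ∑ i, x i * x i)) * χ (∑ i, x i * v i)
        = ∑ s : F, ∑ x : Fin (4 * k + 2) → F,
            χ (s * (∑ i, x i * x i) + ∑ i, x i * v i) := by
      simp_rw [Finset.sum_mul, map_add_eq_mul]
      exact Finset.sum_comm
    have step3 : ∑ x : Fin (4 * k + 2) → F, χ ((0 : F) * (∑ i, x i * x i) + ∑ i, x i * v i)
        = if v = 0 then ((Fintype.card F : ℂ)) ^ (4 * k + 2) else 0 := by
      simp_rw [zero_mul, zero_add]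
      exact vsum_zero hχ v
    have step4 : ∑ s ∈ univ.erase (0 : F), ∑ x : Fin (4 * k + 2) → F,
          χ (s * (∑ i, x i * x i) + ∑ i, x i * v i)
        = -((Fintype.card F : ℂ) ^ (2 * k + 1))
            * ((if (∑ i, v i * v i) = (0 : F) then (Fintype.card F : ℂ) else 0) - 1) := by
      have : ∀ s ∈ univ.erase (0 : F), ∑ x : Fin (4 * k + 2) → F,
            χ (s * (∑ i, x i * x i) + ∑ i, x i * v i)
          = χ (-(∑ i, v i * v i) * (4 * s)⁻¹) * -((Fintype.card F : ℂ) ^ (2 * k + 1)) := by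
        intro s hs
        rw [Finset.mem_erase] at hs
        rw [vsum_quad hq hχ hs.1 v, hpow s hs.1]
      rw [Finset.sum_congr rfl this, ← Finset.sum_mul, sum_inv hq hχ]
      ring
    rw [step1, step2, ← Finset.sum_erase_add _ _ (mem_univ (0 : F)), step3, step4]
    ring
  have expand : (Fintype.card F : ℂ)
        * ((if v = 0 then (Fintype.card F : ℂ) ^ (4 * k + 1) else 0)
          - (Fintype.card F : ℂ) ^ (2 * k)
              * ((if (∑ i, v i * v i) = (0 : F) then (Fintype.card F : ℂ) else 0) - 1))
      = (if v = 0 then (Fintype.card F : ℂ) ^ (4 * k + 2) else 0)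
        - (Fintype.card F : ℂ) ^ (2 * k + 1)
            * ((if (∑ i, v i * v i) = (0 : F) then (Fintype.card F : ℂ) else 0) - 1) := by
    by_cases hv : v = 0 <;> by_cases hQ : (∑ i, v i * v i) = (0 : F) <;>
      simp only [hv, hQ, if_true, if_false] <;> ring
  exact mul_left_cancel₀ hcq (key.trans expand.symm)

/-- For `d = 4k+2`, `k ≥ 1`, `q ≡ 3 mod 4`, and any `G ⊂ F_q^d`:
`Σ_{x ∈ S_0} |1̂_G(x)|² ≤ q^{d−1}|G| + q^{(d−2)/2}|G|²`. -/
theorem restriction_zero_sphere_L2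
    (F : Type) [Field F] [Fintype F] [DecidableEq F]
    (hq : Fintype.card F % 4 = 3)
    (χ : AddChar F ℂ) (hχ : χ ≠ 1) (k : ℕ) (hk : 1 ≤ k)
    (G : Finset (Fin (4 * k + 2) → F)) :
    ∑ x ∈ Finset.univ.filter (fun x : Fin (4 * k + 2) → F => ∑ i, x i * x i = 0),
        ‖∑ m ∈ G, χ (-∑ i, x i * m i)‖ ^ 2 ≤
      (Fintype.card F : ℝ) ^ (4 * k + 1) * G.card +
        (Fintype.card F : ℝ) ^ (2 * k) * (G.card : ℝ) ^ 2 := by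
  set S₀ := Finset.univ.filter (fun x : Fin (4 * k + 2) → F => ∑ i, x i * x i = 0) with hS₀
  set qR : ℝ := (Fintype.card F : ℝ) with hqR
  have hq0 : (0 : ℝ) ≤ qR := by positivity
  -- Step A : rewrite each norm squared as a double sum
  have stepA : ∀ x : Fin (4 * k + 2) → F,
      ‖∑ m ∈ G, χ (-∑ i, x i * m i)‖ ^ 2
        = (∑ m ∈ G, ∑ m' ∈ G, χ (∑ i, x i * (m' i - m i))).re := by
    intro x
    have h1 : (‖∑ m ∈ G, χ (-∑ i, x i * m i)‖ : ℝ) ^ 2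
        = ((∑ m ∈ G, χ (-∑ i, x i * m i))
          * (starRingEnd ℂ) (∑ m ∈ G, χ (-∑ i, x i * m i))).re := by
      rw [Complex.mul_conj, Complex.ofReal_re, Complex.sq_norm]
    rw [h1]
    congr 1
    rw [map_sum]
    have h2 : ∀ m' : Fin (4 * k + 2) → F, (starRingEnd ℂ) (χ (-∑ i, x i * m' i)) = χ (∑ i, x i * m' i) := by
      intro m'
      rw [AddChar.map_neg_eq_conj, Complex.conj_conj]
    rw [Finset.sum_congr rfl fun m' _ => h2 m', Finset.sum_mul_sum]
    refine Finset.sum_congr rfl fun m _ => Finset.sum_congr rfl fun m' _ => ?_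
    rw [← map_add_eq_mul]
    congr 1
    have harg : ∑ i, x i * (m' i - m i) = ∑ i, (x i * m' i - x i * m i) :=
      Finset.sum_congr rfl fun i _ => by ring
    rw [harg, Finset.sum_sub_distrib]
    ring
  rw [Finset.sum_congr rfl fun x _ => stepA x, ← Complex.re_sum]
  rw [Finset.sum_comm]
  have swap2 : ∀ m : Fin (4 * k + 2) → F, ∑ x ∈ S₀, ∑ m' ∈ G, χ (∑ i, x i * (m' i - m i))
      = ∑ m' ∈ G, ∑ x ∈ S₀, χ (∑ i, x i * (m' i - m i)) := fun m => Finset.sum_comm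
  rw [Finset.sum_congr rfl fun m _ => swap2 m]
  -- evaluate the inner sums using `Keval`
  have hK : ∀ m m' : Fin (4 * k + 2) → F, ∑ x ∈ S₀, χ (∑ i, x i * (m' i - m i))
      = (((if (fun i => m' i - m i) = 0 then qR ^ (4 * k + 1) else 0)
          - qR ^ (2 * k) * ((if (∑ i, (m' i - m i) * (m' i - m i)) = (0 : F) then qR else 0) - 1) : ℝ) : ℂ) := by
    intro m m'
    rw [hS₀, Keval hq hχ k (fun i => m' i - m i)]
    split_ifs <;> simp only [hqR] <;> push_cast <;> ring
  rw [Finset.sum_congr rfl fun m _ => Finset.sum_congr rfl fun m' _ => hK m m']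
  simp_rw [← Complex.ofReal_sum]
  rw [Complex.ofReal_re]
  -- now a purely real estimate
  have bound : ∀ m ∈ G, ∀ m' ∈ G,
      ((if (fun i => m' i - m i) = 0 then qR ^ (4 * k + 1) else 0)
        - qR ^ (2 * k) * ((if (∑ i, (m' i - m i) * (m' i - m i)) = (0 : F) then qR else 0) - 1))
      ≤ (if m' = m then qR ^ (4 * k + 1) else 0) + qR ^ (2 * k) := by
    intro m _ m' _
    have hiff : ((fun i => m' i - m i) = 0) ↔ (m' = m) := by
      constructor
      · intro h
        funext i
        have := congrFun h i
        simpa [sub_eq_zero] using this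
      · intro h; subst h; funext i; simp
    rw [if_congr hiff rfl rfl]
    have hB : (0:ℝ) ≤ (if (∑ i, (m' i - m i) * (m' i - m i)) = (0 : F) then qR else 0) := by
      split_ifs <;> simp [hq0]
    have hpow : (0:ℝ) ≤ qR ^ (2 * k) := by positivity
    nlinarith [hpow, hB]
  calc ∑ m ∈ G, ∑ m' ∈ G,
        ((if (fun i => m' i - m i) = 0 then qR ^ (4 * k + 1) else 0)
          - qR ^ (2 * k) * ((if (∑ i, (m' i - m i) * (m' i - m i)) = (0 : F) then qR else 0) - 1))
      ≤ ∑ m ∈ G, ∑ m' ∈ G, ((if m' = m then qR ^ (4 * k + 1) else 0) + qR ^ (2 * k)) := by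
        refine Finset.sum_le_sum fun m hm => Finset.sum_le_sum fun m' hm' => bound m hm m' hm'
    _ = qR ^ (4 * k + 1) * G.card + qR ^ (2 * k) * (G.card : ℝ) ^ 2 := by
        have inner : ∀ m ∈ G, ∑ m' ∈ G, ((if m' = m then qR ^ (4 * k + 1) else 0) + qR ^ (2 * k))
            = qR ^ (4 * k + 1) + (G.card : ℝ) * qR ^ (2 * k) := by
          intro m hm
          rw [Finset.sum_add_distrib, Finset.sum_const, nsmul_eq_mul,
            Finset.sum_ite_eq' G m (fun _ => qR ^ (4 * k + 1)), if_pos hm]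
        rw [Finset.sum_congr rfl inner, Finset.sum_const, nsmul_eq_mul]
        ring
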